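/- Fix a bounded linear H: 𝓗 → ℝ^m with adjoint H*, a symmetric positive definite Γ ∈ ℝ^{m×m} with smallest eigenvalue γ_min > 0, and a positive semidefinite self-adjoint Hilbert–Schmidt operator C̄ on 𝓗, and define the mean-field Kalman gain K̄ := (C̄H*)(H C̄ H* + Γ)^{−1}. For any self-adjoint Hilbert–Schmidt operator C on 𝓗, let A := H C H* with eigendecomposition A = Σ_i λ_i q_i q_iᵀ, positive part Ã := Σ_{i: λ_i ≥ 0} λ_i q_i q_iᵀ, and define the truncated gain K := (CH*)(Ã + Γ)^{−1}. Then there exists a constant c̃ < ∞, depending only on m, ‖H‖_{op}, γ_min and the Hilbert–Schmidt norm of K̄H, such that for every such C: ‖K − K̄‖_{HS(ℝ^m,𝓗)} ≤ c̃ · ‖C − C̄‖_{𝓗⊗𝓗}. -/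

import Mathlib

open MeasureTheory ContinuousLinearMap Finset
open scoped RealInnerProductSpace ENNReal

/-- Hilbert–Schmidt norm of an operator on `𝓗`, computed in the orthonormal basis `e`. -/
noncomputable def hsNorm {H : Type*} [NormedAddCommGroup H] [InnerProductSpace ℝ H]
    (e : HilbertBasis ℕ ℝ H) (T : H →L[ℝ] H) : ℝ :=
  Real.sqrt (∑' k, ‖T (e k)‖ ^ 2)

/-- Hilbert–Schmidt norm of an operator `ℝ^m → 𝓗`. -/
noncomputable def hsNormFin {H : Type*} [NormedAddCommGroup H] [InnerProductSpace ℝ H]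
    {m : ℕ} (K : EuclideanSpace ℝ (Fin m) →L[ℝ] H) : ℝ :=
  Real.sqrt (∑ i : Fin m, ‖K (EuclideanSpace.single i (1 : ℝ))‖ ^ 2)

/-- The rank-one operator `x xᵀ`. -/
noncomputable def outer {E : Type*} [NormedAddCommGroup E] [InnerProductSpace ℝ E]
    (x : E) : E →L[ℝ] E :=
  (innerSL ℝ x).smulRight x

lemma outer_apply {E : Type*} [NormedAddCommGroup E] [InnerProductSpace ℝ E]
    (x y : E) : outer x y = ⟪x, y⟫ • x := rfl

lemma norm_outer_le_one {E : Type*} [NormedAddCommGroup E] [InnerProductSpace ℝ E]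
    {x : E} (hx : ‖x‖ = 1) : ‖outer x‖ ≤ 1 := by
  refine opNorm_le_bound _ zero_le_one (fun y => ?_)
  rw [outer_apply, norm_smul, hx]
  calc ‖⟪x, y⟫‖ * 1 = ‖⟪x, y⟫‖ := mul_one _
    _ ≤ ‖x‖ * ‖y‖ := norm_inner_le_norm x y
    _ = 1 * ‖y‖ := by rw [hx]

lemma opNorm_le_hsNorm {H : Type*} [NormedAddCommGroup H] [InnerProductSpace ℝ H]
    [CompleteSpace H] (e : HilbertBasis ℕ ℝ H) (T : H →L[ℝ] H)
    (hs : Summable fun k => ‖T (e k)‖ ^ 2) : ‖T‖ ≤ hsNorm e T := by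
  rw [hsNorm]
  set B := ∑' k, ‖T (e k)‖ ^ 2 with hB
  refine T.opNorm_le_bound (Real.sqrt_nonneg _) (fun x => ?_)
  have h2 : HasSum (fun k => e.repr x k • T (e k)) (T x) := by
    simpa [_root_.map_smul] using (e.hasSum_repr x).mapL T
  have ha : Summable fun k => ‖(e.repr x k : ℝ)‖ ^ 2 := by
    simpa [e.repr_apply_apply] using e.orthonormal.inner_products_summable x
  have hsum : Summable fun k => ‖e.repr x k • T (e k)‖ := by
    refine Summable.of_nonneg_of_le (fun k => norm_nonneg _)
      (fun k => ?_) ((ha.add hs).div_const 2)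
    rw [norm_smul]
    nlinarith [sq_nonneg (‖(e.repr x k : ℝ)‖ - ‖T (e k)‖), norm_nonneg (e.repr x k),
      norm_nonneg (T (e k))]
  have key : ∀ s : Finset ℕ, ∑ k ∈ s, ‖e.repr x k • T (e k)‖ ≤ Real.sqrt B * ‖x‖ := by
    intro s
    have hcs : (∑ k ∈ s, ‖(e.repr x k : ℝ)‖ * ‖T (e k)‖) ^ 2 ≤
        (∑ k ∈ s, ‖(e.repr x k : ℝ)‖ ^ 2) * ∑ k ∈ s, ‖T (e k)‖ ^ 2 :=
      Finset.sum_mul_sq_le_sq_mul_sq s _ _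
    have h1 : ∑ k ∈ s, ‖(e.repr x k : ℝ)‖ ^ 2 ≤ ‖x‖ ^ 2 := by
      simpa [e.repr_apply_apply] using e.orthonormal.sum_inner_products_le (s := s) x
    have h2' : ∑ k ∈ s, ‖T (e k)‖ ^ 2 ≤ B := Summable.sum_le_tsum s (fun k _ => sq_nonneg _) hs
    have hnn : 0 ≤ ∑ k ∈ s, ‖(e.repr x k : ℝ)‖ * ‖T (e k)‖ :=
      Finset.sum_nonneg fun k _ => mul_nonneg (norm_nonneg _) (norm_nonneg _)
    calc ∑ k ∈ s, ‖e.repr x k • T (e k)‖ = ∑ k ∈ s, ‖(e.repr x k : ℝ)‖ * ‖T (e k)‖ := by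
          simp [norm_smul]
      _ ≤ Real.sqrt ((‖x‖ ^ 2) * B) := by
          rw [← Real.sqrt_sq hnn]
          refine Real.sqrt_le_sqrt ?_
          calc (∑ k ∈ s, ‖(e.repr x k : ℝ)‖ * ‖T (e k)‖) ^ 2
              ≤ (∑ k ∈ s, ‖(e.repr x k : ℝ)‖ ^ 2) * ∑ k ∈ s, ‖T (e k)‖ ^ 2 := hcs
            _ ≤ ‖x‖ ^ 2 * B :=
                mul_le_mul h1 h2' (Finset.sum_nonneg fun k _ => sq_nonneg _) (sq_nonneg _)
      _ = Real.sqrt B * ‖x‖ := by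
          rw [Real.sqrt_mul (sq_nonneg _), Real.sqrt_sq (norm_nonneg _), mul_comm]
  calc ‖T x‖ = ‖∑' k, e.repr x k • T (e k)‖ := by rw [h2.tsum_eq]
    _ ≤ ∑' k, ‖e.repr x k • T (e k)‖ := norm_tsum_le_tsum_norm hsum
    _ ≤ Real.sqrt B * ‖x‖ := Summable.tsum_le_of_sum_le hsum key

lemma hsNormFin_le_sqrt_mul {H : Type*} [NormedAddCommGroup H] [InnerProductSpace ℝ H]
    {m : ℕ} (T : EuclideanSpace ℝ (Fin m) →L[ℝ] H) :
    hsNormFin T ≤ Real.sqrt m * ‖T‖ := by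
  rw [hsNormFin]
  have h : ∑ i : Fin m, ‖T (EuclideanSpace.single i (1 : ℝ))‖ ^ 2 ≤ (m : ℝ) * ‖T‖ ^ 2 := by
    calc ∑ i : Fin m, ‖T (EuclideanSpace.single i (1 : ℝ))‖ ^ 2
        ≤ ∑ _i : Fin m, ‖T‖ ^ 2 := by
          refine Finset.sum_le_sum (fun i _ => ?_)
          have h1 : ‖T (EuclideanSpace.single i (1 : ℝ))‖ ≤ ‖T‖ := by
            calc ‖T (EuclideanSpace.single i (1 : ℝ))‖
                ≤ ‖T‖ * ‖EuclideanSpace.single i (1 : ℝ)‖ := T.le_opNorm _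
              _ = ‖T‖ := by rw [EuclideanSpace.norm_single]; simp
          exact pow_le_pow_left₀ (norm_nonneg _) h1 2
      _ = (m : ℝ) * ‖T‖ ^ 2 := by simp [Finset.card_univ, mul_comm]
  calc Real.sqrt (∑ i : Fin m, ‖T (EuclideanSpace.single i (1 : ℝ))‖ ^ 2)
      ≤ Real.sqrt ((m : ℝ) * ‖T‖ ^ 2) := Real.sqrt_le_sqrt h
    _ = Real.sqrt m * ‖T‖ := by
        rw [Real.sqrt_mul (Nat.cast_nonneg m), Real.sqrt_sq (norm_nonneg _)]

lemma opNorm_le_of_comp_eq {H : Type*} [NormedAddCommGroup H] [InnerProductSpace ℝ H]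
    {m : ℕ} (T D : EuclideanSpace ℝ (Fin m) →L[ℝ] H)
    (S : EuclideanSpace ℝ (Fin m) →L[ℝ] EuclideanSpace ℝ (Fin m))
    {γ : ℝ} (hγ : 0 < γ) (hlow : ∀ x, γ * ‖x‖ ≤ ‖S x‖) (hTS : T ∘L S = D) :
    ‖T‖ ≤ ‖D‖ / γ := by
  have hinj : Function.Injective (S : EuclideanSpace ℝ (Fin m) →ₗ[ℝ] EuclideanSpace ℝ (Fin m)) := by
    rw [← LinearMap.ker_eq_bot, LinearMap.ker_eq_bot']
    intro x hx
    have := hlow x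
    rw [show S x = 0 from hx] at this
    simp only [norm_zero] at this
    have : ‖x‖ ≤ 0 := by nlinarith
    simpa using le_antisymm this (norm_nonneg x)
  have hsurj : Function.Surjective
      (S : EuclideanSpace ℝ (Fin m) →ₗ[ℝ] EuclideanSpace ℝ (Fin m)) :=
    LinearMap.injective_iff_surjective.mp hinj
  refine T.opNorm_le_bound (div_nonneg (norm_nonneg _) hγ.le) (fun y => ?_)
  obtain ⟨x, hx⟩ := hsurj y
  have hx' : S x = y := hx
  have h1 : ‖T y‖ = ‖D x‖ := by rw [← hx', ← hTS]; rfl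
  have h2 : ‖D x‖ ≤ ‖D‖ * ‖x‖ := D.le_opNorm x
  have h3 : γ * ‖x‖ ≤ ‖y‖ := by rw [← hx']; exact hlow x
  rw [h1]
  calc ‖D x‖ ≤ ‖D‖ * ‖x‖ := h2
    _ ≤ ‖D‖ * (‖y‖ / γ) := by
        refine mul_le_mul_of_nonneg_left ?_ (norm_nonneg _)
        rw [le_div_iff₀ hγ]; linarith [h3]
    _ = ‖D‖ / γ * ‖y‖ := by ring
set_option maxHeartbeats 1000000 in
theorem stmt6
    {H : Type*} [NormedAddCommGroup H] [InnerProductSpace ℝ H] [CompleteSpace H]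
    (e : HilbertBasis ℕ ℝ H)
    {m : ℕ} (Hop : H →L[ℝ] EuclideanSpace ℝ (Fin m))
    (Γ : EuclideanSpace ℝ (Fin m) →L[ℝ] EuclideanSpace ℝ (Fin m))
    (hΓsa : IsSelfAdjoint Γ) (γmin : ℝ) (hγ : 0 < γmin)
    (hΓpos : ∀ x : EuclideanSpace ℝ (Fin m), γmin * ‖x‖ ^ 2 ≤ ⟪x, Γ x⟫)
    (Cb : H →L[ℝ] H) (hCbsa : IsSelfAdjoint Cb) (hCbpos : ∀ x : H, 0 ≤ ⟪x, Cb x⟫)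
    (hCbHS : Summable fun k => ‖Cb (e k)‖ ^ 2)
    (Kbar : EuclideanSpace ℝ (Fin m) →L[ℝ] H)
    (hKbar : Kbar ∘L (Hop ∘L Cb ∘L (ContinuousLinearMap.adjoint Hop) + Γ)
      = Cb ∘L (ContinuousLinearMap.adjoint Hop)) :
    ∃ c : ℝ, 0 < c ∧
      ∀ (C : H →L[ℝ] H), IsSelfAdjoint C → (Summable fun k => ‖C (e k)‖ ^ 2) →
      ∀ (lam : Fin m → ℝ) (q : Fin m → EuclideanSpace ℝ (Fin m)), Orthonormal ℝ q →
        Hop ∘L C ∘L (ContinuousLinearMap.adjoint Hop) = (∑ i : Fin m, lam i • outer (q i)) →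
      ∀ (Atil : EuclideanSpace ℝ (Fin m) →L[ℝ] EuclideanSpace ℝ (Fin m)),
        Atil = (∑ i ∈ Finset.univ.filter (fun i => 0 ≤ lam i), lam i • outer (q i)) →
      ∀ (K : EuclideanSpace ℝ (Fin m) →L[ℝ] H),
        K ∘L (Atil + Γ) = C ∘L (ContinuousLinearMap.adjoint Hop) →
        hsNormFin (K - Kbar) ≤ c * hsNorm e (C - Cb) := by
  classical
  set Hs := ContinuousLinearMap.adjoint Hop with hHs
  have hHsnorm : ‖Hs‖ = ‖Hop‖ := LinearIsometryEquiv.norm_map ContinuousLinearMap.adjoint Hop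
  set B : ℝ := ‖Hop‖ + ‖Kbar‖ * ((m : ℝ) * ‖Hop‖ ^ 2) + ‖Kbar ∘L Hop‖ * ‖Hop‖ with hBdef
  have hB0 : 0 ≤ B := by positivity
  refine ⟨Real.sqrt m / γmin * B + 1, by positivity, ?_⟩
  intro C hCsa hCHS lam q hq hA Atil hAtil K hK
  -- summability of the difference
  have hΔsum : Summable fun k => ‖(C - Cb) (e k)‖ ^ 2 := by
    refine Summable.of_nonneg_of_le (fun k => sq_nonneg _) (fun k => ?_)
      ((hCHS.add hCbHS).mul_left 2)
    have h0 : ‖(C - Cb) (e k)‖ ≤ ‖C (e k)‖ + ‖Cb (e k)‖ := by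
      simpa using norm_sub_le (C (e k)) (Cb (e k))
    nlinarith [h0, sq_nonneg (‖C (e k)‖ - ‖Cb (e k)‖), norm_nonneg ((C - Cb) (e k)),
      norm_nonneg (C (e k)), norm_nonneg (Cb (e k))]
  have hΔ : ‖C - Cb‖ ≤ hsNorm e (C - Cb) := opNorm_le_hsNorm e _ hΔsum
  have hhs0 : 0 ≤ hsNorm e (C - Cb) := Real.sqrt_nonneg _
  have hΔ0 : 0 ≤ ‖C - Cb‖ := norm_nonneg _
  -- eigenvalue identity
  have hortho : ∀ i j, ⟪q i, q j⟫ = if i = j then (1:ℝ) else 0 := orthonormal_iff_ite.mp hq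
  have hlam : ∀ j, ⟪q j, (Hop ∘L C ∘L Hs) (q j)⟫ = lam j := by
    intro j
    rw [hA]
    simp only [ContinuousLinearMap.sum_apply, ContinuousLinearMap.smul_apply, outer_apply,
      inner_sum, inner_smul_right, real_inner_smul_right]
    have : ∀ i, lam i * (⟪q i, q j⟫ * ⟪q j, q i⟫) = if i = j then lam j else 0 := by
      intro i
      by_cases h : i = j
      · subst h; simp [hortho i i, hq.1 i]
      · simp [hortho i j, h]
    rw [Finset.sum_congr rfl (fun i _ => by rw [this i])]
    simp
  -- bound on negative eigenvalues
  have hneg : ∀ j, ¬ 0 ≤ lam j → |lam j| ≤ ‖Hop‖ ^ 2 * ‖C - Cb‖ := by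
    intro j hj
    push_neg at hj
    rw [abs_of_neg hj]
    have hq1 : ‖q j‖ = 1 := hq.1 j
    have hpos0 : 0 ≤ ⟪q j, (Hop ∘L Cb ∘L Hs) (q j)⟫ := by
      have : ⟪q j, (Hop ∘L Cb ∘L Hs) (q j)⟫ = ⟪Hs (q j), Cb (Hs (q j))⟫ := by
        simp only [ContinuousLinearMap.comp_apply]
        rw [hHs, ← ContinuousLinearMap.adjoint_inner_left]
      rw [this]; exact hCbpos _
    have hGle : ⟪q j, (Hop ∘L (Cb - C) ∘L Hs) (q j)⟫ ≤ ‖Hop‖ ^ 2 * ‖C - Cb‖ := by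
      calc ⟪q j, (Hop ∘L (Cb - C) ∘L Hs) (q j)⟫
          ≤ ‖q j‖ * ‖(Hop ∘L (Cb - C) ∘L Hs) (q j)‖ := real_inner_le_norm _ _
        _ ≤ ‖q j‖ * (‖Hop ∘L (Cb - C) ∘L Hs‖ * ‖q j‖) := by
            refine mul_le_mul_of_nonneg_left (ContinuousLinearMap.le_opNorm _ _) (norm_nonneg _)
        _ = ‖Hop ∘L (Cb - C) ∘L Hs‖ := by rw [hq1]; ring
        _ ≤ ‖Hop‖ * ‖(Cb - C) ∘L Hs‖ := ContinuousLinearMap.opNorm_comp_le _ _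
        _ ≤ ‖Hop‖ * (‖Cb - C‖ * ‖Hs‖) := by
            refine mul_le_mul_of_nonneg_left (ContinuousLinearMap.opNorm_comp_le _ _)
              (norm_nonneg _)
        _ = ‖Hop‖ ^ 2 * ‖C - Cb‖ := by rw [hHsnorm, norm_sub_rev]; ring
    have hsplit : ⟪q j, (Hop ∘L (Cb - C) ∘L Hs) (q j)⟫
        = ⟪q j, (Hop ∘L Cb ∘L Hs) (q j)⟫ - lam j := by
      rw [← hlam j]
      simp only [ContinuousLinearMap.comp_apply, ContinuousLinearMap.sub_apply, map_sub,
        inner_sub_right]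
    linarith [hpos0, hGle, hsplit ▸ hGle]
  -- bound on Atil - A
  have hAtilA : ‖Atil - (Hop ∘L C ∘L Hs)‖ ≤ (m : ℝ) * (‖Hop‖ ^ 2 * ‖C - Cb‖) := by
    have hsplit : Atil - (Hop ∘L C ∘L Hs)
        = -(∑ i ∈ Finset.univ.filter (fun i => ¬ 0 ≤ lam i), lam i • outer (q i)) := by
      rw [hAtil, hA, ← Finset.sum_filter_add_sum_filter_not Finset.univ (fun i => 0 ≤ lam i)
        (fun i => lam i • outer (q i))]
      abel
    rw [hsplit, norm_neg]
    calc ‖∑ i ∈ Finset.univ.filter (fun i => ¬ 0 ≤ lam i), lam i • outer (q i)‖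
        ≤ ∑ i ∈ Finset.univ.filter (fun i => ¬ 0 ≤ lam i), ‖lam i • outer (q i)‖ :=
          norm_sum_le _ _
      _ ≤ ∑ i ∈ Finset.univ.filter (fun i => ¬ 0 ≤ lam i), ‖Hop‖ ^ 2 * ‖C - Cb‖ := by
          refine Finset.sum_le_sum (fun i hi => ?_)
          rw [Finset.mem_filter] at hi
          have h1 : ‖lam i • outer (q i)‖ = |lam i| * ‖outer (q i)‖ :=
            (norm_smul (lam i) (outer (q i))).trans (by rw [Real.norm_eq_abs])
          rw [h1]
          calc |lam i| * ‖outer (q i)‖ ≤ |lam i| * 1 :=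
                mul_le_mul_of_nonneg_left (norm_outer_le_one (hq.1 i)) (abs_nonneg _)
            _ = |lam i| := mul_one _
            _ ≤ ‖Hop‖ ^ 2 * ‖C - Cb‖ := hneg i hi.2
      _ ≤ (m : ℝ) * (‖Hop‖ ^ 2 * ‖C - Cb‖) := by
          rw [Finset.sum_const, nsmul_eq_mul]
          refine mul_le_mul_of_nonneg_right ?_ (by positivity)
          exact_mod_cast Finset.card_le_card (Finset.filter_subset _ _) |>.trans
            (by simp [Finset.card_univ] : (Finset.univ : Finset (Fin m)).card ≤ m)
  -- the D identity
  set D : EuclideanSpace ℝ (Fin m) →L[ℝ] H :=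
    (C - Cb) ∘L Hs - Kbar ∘L (Atil - (Hop ∘L C ∘L Hs)) - (Kbar ∘L Hop) ∘L ((C - Cb) ∘L Hs)
    with hDdef
  have hKbarΓ : Kbar ∘L Γ = Cb ∘L Hs - Kbar ∘L (Hop ∘L Cb ∘L Hs) := by
    have h' : Kbar ∘L (Hop ∘L Cb ∘L Hs) + Kbar ∘L Γ = Cb ∘L Hs := by
      rw [← ContinuousLinearMap.comp_add, hKbar]
    exact eq_sub_iff_add_eq.mpr ((add_comm _ _).trans h')
  have hD : (K - Kbar) ∘L (Atil + Γ) = D := by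
    rw [hDdef, ContinuousLinearMap.sub_comp, hK, ContinuousLinearMap.comp_add Kbar, hKbarΓ]
    simp only [ContinuousLinearMap.comp_sub, ContinuousLinearMap.sub_comp,
      ContinuousLinearMap.comp_assoc]
    abel
  -- lower bound on Atil + Γ
  have hlow : ∀ x, γmin * ‖x‖ ≤ ‖(Atil + Γ) x‖ := by
    intro x
    have hAtilpos : 0 ≤ ⟪x, Atil x⟫ := by
      rw [hAtil]
      simp only [ContinuousLinearMap.sum_apply, ContinuousLinearMap.smul_apply, outer_apply,
        inner_sum, real_inner_smul_right]
      refine Finset.sum_nonneg (fun i hi => ?_)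
      rw [Finset.mem_filter] at hi
      have hc : ⟪x, q i⟫ = ⟪q i, x⟫ := real_inner_comm _ _
      rw [hc]
      exact mul_nonneg hi.2 (mul_self_nonneg _)
    have h1 : γmin * ‖x‖ ^ 2 ≤ ⟪x, (Atil + Γ) x⟫ := by
      rw [ContinuousLinearMap.add_apply, inner_add_right]
      linarith [hΓpos x]
    have h2 : ⟪x, (Atil + Γ) x⟫ ≤ ‖x‖ * ‖(Atil + Γ) x‖ := real_inner_le_norm _ _
    rcases eq_or_lt_of_le (norm_nonneg x) with h | h
    · rw [← h]; simp [norm_nonneg]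
    · have := le_trans h1 h2
      nlinarith
  -- operator norm bound
  have hKKbar : ‖K - Kbar‖ ≤ ‖D‖ / γmin :=
    opNorm_le_of_comp_eq (K - Kbar) D (Atil + Γ) hγ hlow hD
  -- bound on ‖D‖
  have hDbound : ‖D‖ ≤ B * ‖C - Cb‖ := by
    rw [hDdef]
    have t1 : ‖(C - Cb) ∘L Hs‖ ≤ ‖C - Cb‖ * ‖Hop‖ := by
      calc ‖(C - Cb) ∘L Hs‖ ≤ ‖C - Cb‖ * ‖Hs‖ := ContinuousLinearMap.opNorm_comp_le _ _
        _ = ‖C - Cb‖ * ‖Hop‖ := by rw [hHsnorm]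
    have t2 : ‖Kbar ∘L (Atil - (Hop ∘L C ∘L Hs))‖
        ≤ ‖Kbar‖ * ((m : ℝ) * (‖Hop‖ ^ 2 * ‖C - Cb‖)) := by
      calc ‖Kbar ∘L (Atil - (Hop ∘L C ∘L Hs))‖ ≤ ‖Kbar‖ * ‖Atil - (Hop ∘L C ∘L Hs)‖ :=
            ContinuousLinearMap.opNorm_comp_le _ _
        _ ≤ ‖Kbar‖ * ((m : ℝ) * (‖Hop‖ ^ 2 * ‖C - Cb‖)) :=
            mul_le_mul_of_nonneg_left hAtilA (norm_nonneg _)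
    have t3 : ‖(Kbar ∘L Hop) ∘L ((C - Cb) ∘L Hs)‖ ≤ ‖Kbar ∘L Hop‖ * (‖C - Cb‖ * ‖Hop‖) := by
      calc ‖(Kbar ∘L Hop) ∘L ((C - Cb) ∘L Hs)‖ ≤ ‖Kbar ∘L Hop‖ * ‖(C - Cb) ∘L Hs‖ :=
            ContinuousLinearMap.opNorm_comp_le _ _
        _ ≤ ‖Kbar ∘L Hop‖ * (‖C - Cb‖ * ‖Hop‖) :=
            mul_le_mul_of_nonneg_left t1 (norm_nonneg _)
    calc ‖(C - Cb) ∘L Hs - Kbar ∘L (Atil - (Hop ∘L C ∘L Hs))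
          - (Kbar ∘L Hop) ∘L ((C - Cb) ∘L Hs)‖
        ≤ ‖(C - Cb) ∘L Hs - Kbar ∘L (Atil - (Hop ∘L C ∘L Hs))‖
          + ‖(Kbar ∘L Hop) ∘L ((C - Cb) ∘L Hs)‖ := norm_sub_le _ _
      _ ≤ ‖(C - Cb) ∘L Hs‖ + ‖Kbar ∘L (Atil - (Hop ∘L C ∘L Hs))‖
          + ‖(Kbar ∘L Hop) ∘L ((C - Cb) ∘L Hs)‖ := by
            linarith [norm_sub_le ((C - Cb) ∘L Hs) (Kbar ∘L (Atil - (Hop ∘L C ∘L Hs)))]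
      _ ≤ ‖C - Cb‖ * ‖Hop‖ + ‖Kbar‖ * ((m : ℝ) * (‖Hop‖ ^ 2 * ‖C - Cb‖))
          + ‖Kbar ∘L Hop‖ * (‖C - Cb‖ * ‖Hop‖) := by linarith
      _ = B * ‖C - Cb‖ := by rw [hBdef]; ring
  -- final chain
  have hchain : hsNormFin (K - Kbar) ≤ Real.sqrt m / γmin * B * hsNorm e (C - Cb) := by
    calc hsNormFin (K - Kbar) ≤ Real.sqrt m * ‖K - Kbar‖ := hsNormFin_le_sqrt_mul _
      _ ≤ Real.sqrt m * (‖D‖ / γmin) :=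
          mul_le_mul_of_nonneg_left hKKbar (Real.sqrt_nonneg _)
      _ ≤ Real.sqrt m * (B * ‖C - Cb‖ / γmin) :=
          mul_le_mul_of_nonneg_left ((div_le_div_iff_of_pos_right hγ).mpr hDbound) (Real.sqrt_nonneg _)
      _ ≤ Real.sqrt m * (B * hsNorm e (C - Cb) / γmin) :=
          mul_le_mul_of_nonneg_left ((div_le_div_iff_of_pos_right hγ).mpr
            (mul_le_mul_of_nonneg_left hΔ hB0)) (Real.sqrt_nonneg _)
      _ = Real.sqrt m / γmin * B * hsNorm e (C - Cb) := by ring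
  calc hsNormFin (K - Kbar) ≤ Real.sqrt m / γmin * B * hsNorm e (C - Cb) := hchain
    _ ≤ (Real.sqrt m / γmin * B + 1) * hsNorm e (C - Cb) :=
        mul_le_mul_of_nonneg_right (by linarith) hhs0
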